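/- Let V be a filtered representation of a filtered Lie algebra g with filtration f^(j). If x ∈ f^(j-1) and y ∈ f^(-j) for some integer j, then trace(ρ(x)ρ(y)) = 0; that is, the trace form of ρ is compatible with the filtration. -/

import Mathlib

/-- For a filtered representation `V` of a filtered Lie algebra `g`,
the trace form is compatible with the filtration:
`x ∈ f^(j-1)`, `y ∈ f^(-j)` implies `trace(ρ(x)ρ(y)) = 0`. -/
theorem traceForm_compatible_with_filtration
    (K L V : Type*) [Field K] [LieRing L] [LieAlgebra K L]
    [AddCommGroup V] [Module K V] [LieRingModule L V] [LieModule K L V]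
    [FiniteDimensional K V]
    (f : ℤ → Submodule K L) (W : ℤ → Submodule K V)
    (hfmono : Monotone f)
    (hfbr : ∀ i j : ℤ, ∀ x ∈ f i, ∀ y ∈ f j, ⁅x, y⁆ ∈ f (i + j))
    (hfexh : ⨆ k, f k = ⊤) (hfsep : ⨅ k, f k = ⊥)
    (hWmono : Monotone W)
    (hWexh : ⨆ k, W k = ⊤) (hWsep : ⨅ k, W k = ⊥)
    (hact : ∀ i j : ℤ, ∀ x ∈ f i, ∀ v ∈ W j, ⁅x, v⁆ ∈ W (i + j)) :
    ∀ j : ℤ, ∀ x ∈ f (j - 1), ∀ y ∈ f (-j),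
      LinearMap.trace K V (LieModule.toEnd K L V x ∘ₗ LieModule.toEnd K L V y) = 0 := by
  intro j x hx y hy
  -- The filtration attains ⊤ (Noetherian)
  obtain ⟨N, hN⟩ := monotone_stabilizes_iff_noetherian.mpr (inferInstance : IsNoetherian K V)
    ⟨fun n : ℕ => W n, fun a b h => hWmono (by exact_mod_cast h)⟩
  have hNle : ∀ k : ℤ, W k ≤ W (N : ℤ) := by
    intro k
    rcases le_or_gt k (N : ℤ) with h | h
    · exact hWmono h
    · have hk : ((k.toNat : ℕ) : ℤ) = k := Int.toNat_of_nonneg (le_of_lt (lt_of_le_of_lt (Int.ofNat_nonneg N) h))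
      have : N ≤ k.toNat := by omega
      have := hN k.toNat this
      change W (N : ℤ) = W (k.toNat : ℤ) at this
      rw [← hk, ← this]
  have hWtop : W (N : ℤ) = ⊤ := by
    rw [← top_le_iff, ← hWexh]
    exact iSup_le hNle
  -- The filtration attains ⊥ (Artinian)
  obtain ⟨M, hM⟩ := IsArtinian.monotone_stabilizes (R := K) (M := V)
    ⟨fun n : ℕ => OrderDual.toDual (W (-n)), fun a b h =>
      hWmono (by simp; exact_mod_cast h)⟩
  have hMle : ∀ k : ℤ, W (-(M : ℤ)) ≤ W k := by
    intro k
    rcases le_or_gt (-(M : ℤ)) k with h | h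
    · exact hWmono h
    · have hk : -(((-k).toNat : ℕ) : ℤ) = k := by omega
      have : M ≤ (-k).toNat := by omega
      have := hM (-k).toNat this
      rw [← hk]
      exact le_of_eq (congrArg OrderDual.ofDual this)
  have hWbot : W (-(M : ℤ)) = ⊥ := by
    rw [← le_bot_iff, ← hWsep]
    exact le_iInf hMle
  -- φ maps W k into W (k - 1)
  set φ : Module.End K V := LieModule.toEnd K L V x ∘ₗ LieModule.toEnd K L V y with hφ
  have hstep : ∀ k : ℤ, ∀ v ∈ W k, φ v ∈ W (k - 1) := by
    intro k v hv
    have h1 : ⁅y, v⁆ ∈ W (-j + k) := hact _ _ y hy v hv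
    have h2 : ⁅x, ⁅y, v⁆⁆ ∈ W ((j - 1) + (-j + k)) := hact _ _ x hx _ h1
    have : (j - 1) + (-j + k) = k - 1 := by ring
    rw [this] at h2
    simpa [φ, LieModule.toEnd_apply_apply] using h2
  have hiter : ∀ n : ℕ, ∀ k : ℤ, ∀ v ∈ W k, (φ ^ n) v ∈ W (k - n) := by
    intro n
    induction n with
    | zero => intro k v hv; simpa using hv
    | succ n ih =>
      intro k v hv
      have := hstep _ _ (ih k v hv)
      have heq : (k - n) - 1 = k - (n + 1 : ℕ) := by push_cast; ring
      rw [heq] at this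
      rw [pow_succ']
      exact this
  -- nilpotency
  have hnil : φ ^ (N + M) = 0 := by
    ext v
    have hv : v ∈ W (N : ℤ) := hWtop ▸ Submodule.mem_top
    have := hiter (N + M) (N : ℤ) v hv
    have hle : ((N : ℤ) - ((N + M : ℕ) : ℤ)) ≤ -(M : ℤ) := by push_cast; omega
    have := hWmono hle this
    rw [hWbot] at this
    simpa using this
  have : IsNilpotent (LinearMap.trace K V φ) :=
    LinearMap.isNilpotent_trace_of_isNilpotent ⟨N + M, hnil⟩
  exact this.eq_zero
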